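/- Let V(y) = y^{−2} + Σ_{k=−1}^{M} a_k y^k be a Laurent polynomial whose coefficients a_k all belong to {0,1}, with M ≥ 1 and a_M = 1. Let τ > 0 be the unique positive real number with V′(τ) = 0. Then τ > 1/2. -/

import Mathlib

lemma sum_geom_deriv_bound (n : ℕ) :
    ∑ k ∈ Finset.range n, ((k : ℝ) + 1) * (1/2) ^ k = 4 - 2 * ((n : ℝ) + 2) * (1/2) ^ n := by
  induction n with
  | zero => norm_num
  | succ n ih =>
    rw [Finset.sum_range_succ, ih]
    push_cast
    ring

/-- Let `V(y) = y^{−2} + Σ_{k=−1}^{M} a_k y^k` with all `a_k ∈ {0,1}`, `M ≥ 1`, `a_M = 1`,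
and let `τ > 0` be the unique positive real with `V′(τ) = 0`. Then `τ > 1/2`. -/
theorem critical_point_gt_half (M : ℤ) (hM : 1 ≤ M) (a : ℤ → ℝ)
    (ha : ∀ k, a k = 0 ∨ a k = 1) (haM : a M = 1)
    (V : ℝ → ℝ)
    (hV : V = fun y => y ^ (-2 : ℤ) + ∑ k ∈ Finset.Icc (-1 : ℤ) M, a k * y ^ k)
    (τ : ℝ) (hτ : 0 < τ) (hcrit : deriv V τ = 0) :
    1 / 2 < τ := by
  by_contra hle
  push_neg at hle
  have hτ0 : τ ≠ 0 := hτ.ne'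
  have hd : HasDerivAt V
      (((-2 : ℤ) : ℝ) * τ ^ ((-2 : ℤ) - 1) +
        ∑ k ∈ Finset.Icc (-1 : ℤ) M, a k * (((k : ℝ)) * τ ^ (k - 1))) τ := by
    rw [hV]
    exact (hasDerivAt_zpow (-2) τ (Or.inl hτ0)).add
      (HasDerivAt.fun_sum fun k _ => ((hasDerivAt_zpow k τ (Or.inl hτ0)).const_mul (a k)))
  have h0 := hd.deriv
  rw [hcrit] at h0
  have hneg3 : ((-2 : ℤ) - 1) = (-3 : ℤ) := by norm_num
  rw [hneg3] at h0
  -- h0 : 0 = -2 * τ ^ (-3 : ℤ) + S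
  have hS : ∑ k ∈ Finset.Icc (-1 : ℤ) M, a k * (((k : ℝ)) * τ ^ (k - 1))
      = 2 * τ ^ (-3 : ℤ) := by
    have : ((-2 : ℤ) : ℝ) = -2 := by norm_num
    rw [this] at h0
    linarith
  -- split the sum
  have hsplit : Finset.Icc (-1 : ℤ) M = Finset.Icc (-1) 0 ∪ Finset.Icc 1 M := by
    ext k
    simp only [Finset.mem_Icc, Finset.mem_union]
    omega
  have hdisj : Disjoint (Finset.Icc (-1 : ℤ) 0) (Finset.Icc 1 M) := by
    rw [Finset.disjoint_left]
    intro k hk hk'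
    simp only [Finset.mem_Icc] at hk hk'
    omega
  rw [hsplit, Finset.sum_union hdisj] at hS
  -- first part nonpositive
  have hS1 : ∑ k ∈ Finset.Icc (-1 : ℤ) 0, a k * (((k : ℝ)) * τ ^ (k - 1)) ≤ 0 := by
    apply Finset.sum_nonpos
    intro k hk
    simp only [Finset.mem_Icc] at hk
    have h1 : 0 ≤ a k := by rcases ha k with h | h <;> simp [h]
    have h2 : (k : ℝ) ≤ 0 := by exact_mod_cast hk.2
    have h3 : (0 : ℝ) < τ ^ (k - 1) := zpow_pos hτ _
    have h5 : (k : ℝ) * τ ^ (k - 1) ≤ 0 := mul_nonpos_iff.mpr (Or.inr ⟨h2, h3.le⟩)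
    exact mul_nonpos_iff.mpr (Or.inl ⟨h1, h5⟩)
  -- second part: reindex
  have hmap : Finset.Icc (1 : ℤ) M
      = Finset.map ⟨fun n : ℕ => (n : ℤ) + 1, by have hi : Function.Injective (fun n : ℕ => (n : ℤ) + 1) := (fun x y h => by simpa using h); exact hi⟩
          (Finset.range M.toNat) := by
    ext k
    simp only [Finset.mem_Icc, Finset.mem_map, Finset.mem_range, Function.Embedding.coeFn_mk]
    constructor
    · rintro ⟨h1, h2⟩
      exact ⟨(k - 1).toNat, by omega, by omega⟩
    · rintro ⟨j, hj, rfl⟩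
      omega
  have hS2 : ∑ k ∈ Finset.Icc (1 : ℤ) M, a k * (((k : ℝ)) * τ ^ (k - 1)) ≤ 4 := by
    rw [hmap, Finset.sum_map]
    simp only [Function.Embedding.coeFn_mk]
    have hstep : ∀ j ∈ Finset.range M.toNat,
        a ((j : ℤ) + 1) * ((((j : ℤ) + 1 : ℤ) : ℝ) * τ ^ ((j : ℤ) + 1 - 1))
          ≤ ((j : ℝ) + 1) * (1/2) ^ j := by
      intro j _
      have hz : ((j : ℤ) + 1 - 1) = (j : ℤ) := by ring
      rw [hz, zpow_natCast]
      have h1 : a ((j : ℤ) + 1) ≤ 1 := by rcases ha ((j : ℤ) + 1) with h | h <;> simp [h]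
      have h1' : 0 ≤ a ((j : ℤ) + 1) := by rcases ha ((j : ℤ) + 1) with h | h <;> simp [h]
      have h2 : τ ^ j ≤ (1/2 : ℝ) ^ j := by
        apply pow_le_pow_left₀ hτ.le
        linarith
      have h3 : (0 : ℝ) ≤ τ ^ j := by positivity
      have h4 : (0 : ℝ) ≤ (j : ℝ) + 1 := by positivity
      push_cast
      calc a ((j : ℤ) + 1) * (((j : ℝ) + 1) * τ ^ j)
          ≤ 1 * (((j : ℝ) + 1) * τ ^ j) :=
            mul_le_mul_of_nonneg_right h1 (by positivity)
        _ = ((j : ℝ) + 1) * τ ^ j := one_mul _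
        _ ≤ ((j : ℝ) + 1) * (1/2) ^ j := mul_le_mul_of_nonneg_left h2 h4
    calc ∑ j ∈ Finset.range M.toNat,
          a ((j : ℤ) + 1) * ((((j : ℤ) + 1 : ℤ) : ℝ) * τ ^ ((j : ℤ) + 1 - 1))
        ≤ ∑ j ∈ Finset.range M.toNat, ((j : ℝ) + 1) * (1/2) ^ j :=
          Finset.sum_le_sum hstep
      _ = 4 - 2 * ((M.toNat : ℝ) + 2) * (1/2) ^ M.toNat := sum_geom_deriv_bound _
      _ ≤ 4 := by
          have : (0:ℝ) < (1/2 : ℝ) ^ M.toNat := by positivity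
          nlinarith
  -- lower bound on 2 τ^{-3}
  have hcube : τ ^ 3 ≤ 1 / 8 := by
    have := pow_le_pow_left₀ hτ.le hle 3
    norm_num at this
    linarith
  have hcubepos : (0 : ℝ) < τ ^ 3 := by positivity
  have hinv : (8 : ℝ) ≤ (τ ^ 3)⁻¹ := by
    have := inv_anti₀ hcubepos hcube
    simpa using this
  have hzeq : τ ^ (-3 : ℤ) = (τ ^ 3)⁻¹ := by
    rw [zpow_neg]
    norm_cast
  rw [hzeq] at hS
  linarith
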